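/- Let V be a finite-dimensional normed real vector space and let (x_*, X, V) be strongly star-shaped (X closed, and x_* + t·(x − x_*) is interior to X for all x ∈ X, t ∈ [0,1)). Let B ⊆ V be the closed unit ball centered at the origin, S the unit sphere, and S(x_*, X) = { x ∈ S : x_* + s·x ∈ X for all s ≥ 0 }. Then X is homeomorphic to B \ S(x_*, X). -/

import Mathlib

open Set Metric Pointwise Filter

section StarGauge

variable {V : Type*} [NormedAddCommGroup V] [NormedSpace ℝ V] {Y : Set V}

theorem sg_zero_int (h0 : (0:V) ∈ Y)
    (hst : ∀ y ∈ Y, ∀ t ∈ Set.Ico (0:ℝ) 1, t • y ∈ interior Y) :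
    (0:V) ∈ interior Y := by
  simpa using hst 0 h0 0 ⟨le_refl 0, zero_lt_one⟩

theorem sg_absorb (h0 : (0:V) ∈ Y)
    (hst : ∀ y ∈ Y, ∀ t ∈ Set.Ico (0:ℝ) 1, t • y ∈ interior Y) (x : V) :
    ∃ t : ℝ, 0 < t ∧ x ∈ t • Y := by
  obtain ⟨ε, hε, hball⟩ := Metric.mem_nhds_iff.1
    (mem_interior_iff_mem_nhds.1 (sg_zero_int h0 hst))
  refine ⟨(‖x‖ + ε) / ε, by positivity, ?_⟩
  rw [Set.mem_smul_set_iff_inv_smul_mem₀ (by positivity : ((‖x‖ + ε) / ε : ℝ) ≠ 0)]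
  apply hball
  simp only [Metric.mem_ball, dist_zero_right, norm_smul, norm_inv, Real.norm_eq_abs]
  rw [abs_of_pos (by positivity : (0:ℝ) < (‖x‖ + ε) / ε)]
  rcases eq_or_lt_of_le (norm_nonneg x) with h | h
  · simp [← h, hε]
  · rw [inv_mul_lt_iff₀ (by positivity), div_mul_eq_mul_div, lt_div_iff₀ hε]
    nlinarith

theorem sg_smul_aux {x : V} {t s : ℝ} (ht : t ≠ 0) (hs : s ≠ 0) :
    (t / s) • t⁻¹ • x = s⁻¹ • x := by
  rw [smul_smul]; congr 1; field_simp

theorem sg_lt (h0 : (0:V) ∈ Y)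
    (hst : ∀ y ∈ Y, ∀ t ∈ Set.Ico (0:ℝ) 1, t • y ∈ interior Y)
    {x : V} {c : ℝ} (hc : 0 < c) (h : gauge Y x < c) : x ∈ c • interior Y := by
  have hne : {r : ℝ | 0 < r ∧ x ∈ r • Y}.Nonempty := by
    obtain ⟨t, ht, hxt⟩ := sg_absorb h0 hst x
    exact ⟨t, ht, hxt⟩
  obtain ⟨r, ⟨hr0, hxr⟩, hrc⟩ := exists_lt_of_csInf_lt hne h
  rw [Set.mem_smul_set_iff_inv_smul_mem₀ hc.ne']
  have hmem := hst _ ((Set.mem_smul_set_iff_inv_smul_mem₀ hr0.ne' _ _).1 hxr)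
    (r / c) ⟨by positivity, (div_lt_one hc).2 hrc⟩
  rwa [sg_smul_aux hr0.ne' hc.ne'] at hmem

theorem sg_gauge_le_of_mem {x : V} {c : ℝ} (hc : 0 < c) (h : x ∈ c • Y) :
    gauge Y x ≤ c :=
  csInf_le ⟨0, fun _ hr => hr.1.le⟩ ⟨hc, h⟩

theorem sg_le (h0 : (0:V) ∈ Y) (hYc : IsClosed Y)
    (hst : ∀ y ∈ Y, ∀ t ∈ Set.Ico (0:ℝ) 1, t • y ∈ interior Y)
    {x : V} {c : ℝ} (hc : 0 < c) (h : gauge Y x ≤ c) : x ∈ c • Y := by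
  rw [Set.mem_smul_set_iff_inv_smul_mem₀ hc.ne']
  have key : ∀ n : ℕ, (c + 1 / ((n:ℝ) + 1))⁻¹ • x ∈ Y := by
    intro n
    have hpos : (0:ℝ) < c + 1 / ((n:ℝ) + 1) := by positivity
    have hlt : gauge Y x < c + 1 / ((n:ℝ) + 1) :=
      lt_of_le_of_lt h (lt_add_of_pos_right c (by positivity))
    have hmem := sg_lt h0 hst hpos hlt
    exact interior_subset ((Set.mem_smul_set_iff_inv_smul_mem₀ hpos.ne' _ _).1 hmem)
  have h1 : Tendsto (fun n : ℕ => c + 1 / ((n:ℝ) + 1)) atTop (nhds c) := by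
    simpa using tendsto_const_nhds.add (tendsto_one_div_add_atTop_nhds_zero_nat (𝕜 := ℝ))
  have h2 : Tendsto (fun n : ℕ => (c + 1 / ((n:ℝ) + 1))⁻¹ • x) atTop (nhds (c⁻¹ • x)) :=
    (h1.inv₀ hc.ne').smul_const x
  exact hYc.mem_of_tendsto h2 (Filter.Eventually.of_forall key)

theorem sg_mem_iff (h0 : (0:V) ∈ Y) (hYc : IsClosed Y)
    (hst : ∀ y ∈ Y, ∀ t ∈ Set.Ico (0:ℝ) 1, t • y ∈ interior Y)
    {x : V} {c : ℝ} (hc : 0 < c) : x ∈ c • Y ↔ gauge Y x ≤ c :=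
  ⟨sg_gauge_le_of_mem hc, sg_le h0 hYc hst hc⟩

theorem sg_memY_iff (h0 : (0:V) ∈ Y) (hYc : IsClosed Y)
    (hst : ∀ y ∈ Y, ∀ t ∈ Set.Ico (0:ℝ) 1, t • y ∈ interior Y)
    (x : V) : x ∈ Y ↔ gauge Y x ≤ 1 := by
  constructor
  · exact gauge_le_one_of_mem
  · intro h
    have := sg_le h0 hYc hst one_pos h
    rwa [one_smul] at this

theorem sg_zero_iff (h0 : (0:V) ∈ Y) (hYc : IsClosed Y)
    (hst : ∀ y ∈ Y, ∀ t ∈ Set.Ico (0:ℝ) 1, t • y ∈ interior Y)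
    {x : V} : gauge Y x = 0 ↔ ∀ s : ℝ, 0 ≤ s → s • x ∈ Y := by
  constructor
  · intro h s hs
    rcases eq_or_lt_of_le hs with rfl | hs'
    · simpa using h0
    · apply (sg_memY_iff h0 hYc hst _).2
      rw [gauge_smul_of_nonneg hs'.le, smul_eq_mul, h]
      simp
  · intro h
    by_contra hne
    have hpos : 0 < gauge Y x := lt_of_le_of_ne (gauge_nonneg x) (Ne.symm hne)
    have hle : gauge Y x ≤ gauge Y x / 2 := by
      apply sg_gauge_le_of_mem (by positivity)
      rw [Set.mem_smul_set_iff_inv_smul_mem₀ (by positivity : (gauge Y x / 2 : ℝ) ≠ 0)]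
      exact h _ (by positivity)
    linarith

theorem sg_cont (h0 : (0:V) ∈ Y) (hYc : IsClosed Y)
    (hst : ∀ y ∈ Y, ∀ t ∈ Set.Ico (0:ℝ) 1, t • y ∈ interior Y) :
    Continuous (gauge Y) := by
  rw [continuous_iff_lower_upperSemicontinuous]
  constructor
  · rw [lowerSemicontinuous_iff_isClosed_preimage]
    intro y
    rcases lt_trichotomy y 0 with hy | rfl | hy
    · convert isClosed_empty
      ext x
      simp only [mem_preimage, mem_Iic, mem_empty_iff_false, iff_false, not_le]
      exact lt_of_lt_of_le hy (gauge_nonneg x)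
    · have hset : gauge Y ⁻¹' Iic 0 =
          ⋂ (s : ℝ), ⋂ (_ : 0 ≤ s), (fun x : V => s • x) ⁻¹' Y := by
        ext x
        simp only [mem_preimage, mem_Iic, mem_iInter]
        constructor
        · intro h s hs
          exact (sg_zero_iff h0 hYc hst).1 (le_antisymm h (gauge_nonneg x)) s hs
        · intro h
          exact le_of_eq ((sg_zero_iff h0 hYc hst).2 h)
      rw [hset]
      exact isClosed_iInter fun s => isClosed_iInter fun _ =>
        hYc.preimage (continuous_const_smul s)
    · have hset : gauge Y ⁻¹' Iic y = y • Y := by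
        ext x
        rw [mem_preimage, mem_Iic, ← sg_mem_iff h0 hYc hst hy]
      rw [hset]
      exact hYc.smul_of_ne_zero hy.ne'
  · rw [upperSemicontinuous_iff_isOpen_preimage]
    intro y
    rcases le_or_gt y 0 with hy | hy
    · convert isOpen_empty
      ext x
      simp only [mem_preimage, mem_Iio, mem_empty_iff_false, iff_false, not_lt]
      exact le_trans hy (gauge_nonneg x)
    · rw [isOpen_iff_forall_mem_open]
      intro x hx
      rw [mem_preimage, mem_Iio] at hx
      have hg0 : (0:ℝ) ≤ gauge Y x := gauge_nonneg x
      set t : ℝ := (gauge Y x + y) / 2 with ht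
      have ht0 : 0 < t := by rw [ht]; linarith
      have htx : gauge Y x < t := by rw [ht]; linarith
      have hty : t < y := by rw [ht]; linarith
      refine ⟨t • interior Y, ?_, isOpen_interior.smul₀ ht0.ne', sg_lt h0 hst ht0 htx⟩
      intro z hz
      rw [mem_preimage, mem_Iio]
      have hz' : z ∈ t • Y := Set.smul_set_mono interior_subset hz
      exact lt_of_le_of_lt (sg_gauge_le_of_mem ht0 hz') hty

theorem sg_homeo (h0 : (0:V) ∈ Y) (hYc : IsClosed Y)
    (hst : ∀ y ∈ Y, ∀ t ∈ Set.Ico (0:ℝ) 1, t • y ∈ interior Y) :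
    Nonempty (↥Y ≃ₜ ↥(Metric.closedBall (0:V) 1 \
      {z ∈ Metric.sphere (0:V) 1 | ∀ s : ℝ, 0 ≤ s → s • z ∈ Y})) := by
  set B : Set V := Metric.closedBall (0:V) 1 \
      {z ∈ Metric.sphere (0:V) 1 | ∀ s : ℝ, 0 ≤ s → s • z ∈ Y} with hB
  have hcont := sg_cont h0 hYc hst
  have hYle : ∀ y ∈ Y, gauge Y y ≤ 1 := fun y hy => gauge_le_one_of_mem hy
  have hden1 : ∀ y ∈ Y, 0 < 1 + ‖y‖ - gauge Y y := by
    intro y hy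
    rcases eq_or_ne y 0 with rfl | hne
    · simp [gauge_zero]
    · have h1 : 0 < ‖y‖ := norm_pos_iff.2 hne
      have h2 := hYle y hy
      linarith
  have hden2 : ∀ x ∈ B, 0 < 1 + gauge Y x - ‖x‖ := by
    intro x hx
    obtain ⟨hx1, hx2⟩ := hx
    rw [Metric.mem_closedBall, dist_zero_right] at hx1
    have hg0 : (0:ℝ) ≤ gauge Y x := gauge_nonneg x
    rcases lt_or_eq_of_le hx1 with h | h
    · linarith
    · have hxs : x ∈ Metric.sphere (0:V) 1 := by
        rw [Metric.mem_sphere, dist_zero_right]; exact h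
      have hray : ¬ ∀ s : ℝ, 0 ≤ s → s • x ∈ Y := fun hr => hx2 ⟨hxs, hr⟩
      have hgne : gauge Y x ≠ 0 := fun hg => hray ((sg_zero_iff h0 hYc hst).1 hg)
      have : 0 < gauge Y x := lt_of_le_of_ne hg0 (Ne.symm hgne)
      linarith
  have hfwd : ∀ y ∈ Y, (1 + ‖y‖ - gauge Y y)⁻¹ • y ∈ B := by
    intro y hy
    have hd := hden1 y hy
    constructor
    · rw [Metric.mem_closedBall, dist_zero_right, norm_smul, norm_inv, Real.norm_eq_abs,
        abs_of_pos hd, inv_mul_eq_div, div_le_one hd]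
      have := hYle y hy
      linarith
    · rintro ⟨hsph, hray⟩
      rw [Metric.mem_sphere, dist_zero_right] at hsph
      have hg0 : gauge Y ((1 + ‖y‖ - gauge Y y)⁻¹ • y) = 0 :=
        (sg_zero_iff h0 hYc hst).2 hray
      rw [gauge_smul_of_nonneg (inv_pos.2 hd).le, smul_eq_mul, mul_eq_zero] at hg0
      rcases hg0 with h' | h'
      · exact (inv_pos.2 hd).ne' h'
      · rw [norm_smul, norm_inv, Real.norm_eq_abs, abs_of_pos hd, h'] at hsph
        have hd' : (0:ℝ) < 1 + ‖y‖ - 0 := by linarith [norm_nonneg y]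
        rw [inv_mul_eq_div, div_eq_one_iff_eq hd'.ne'] at hsph
        linarith
  have hbwd : ∀ x ∈ B, (1 + gauge Y x - ‖x‖)⁻¹ • x ∈ Y := by
    intro x hx
    have hd := hden2 x hx
    have hx1 : ‖x‖ ≤ 1 := by
      have := hx.1
      rwa [Metric.mem_closedBall, dist_zero_right] at this
    apply (sg_memY_iff h0 hYc hst _).2
    rw [gauge_smul_of_nonneg (inv_pos.2 hd).le, smul_eq_mul, inv_mul_eq_div, div_le_one hd]
    linarith
  refine ⟨Homeomorph.mk
    ⟨fun y => ⟨(1 + ‖(y:V)‖ - gauge Y (y:V))⁻¹ • (y:V), hfwd _ y.2⟩,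
     fun x => ⟨(1 + gauge Y (x:V) - ‖(x:V)‖)⁻¹ • (x:V), hbwd _ x.2⟩, ?_, ?_⟩ ?_ ?_⟩
  · -- left inverse
    rintro ⟨y, hy⟩
    apply Subtype.ext
    have hd := hden1 y hy
    set a : ℝ := 1 + ‖y‖ - gauge Y y with ha
    show (1 + gauge Y (a⁻¹ • y) - ‖a⁻¹ • y‖)⁻¹ • a⁻¹ • y = y
    rw [gauge_smul_of_nonneg (inv_pos.2 hd).le, smul_eq_mul, norm_smul, norm_inv,
      Real.norm_eq_abs, abs_of_pos hd]
    have key : 1 + a⁻¹ * gauge Y y - a⁻¹ * ‖y‖ = a⁻¹ := by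
      field_simp
      linarith
    rw [key, smul_smul, inv_inv, mul_inv_cancel₀ hd.ne', one_smul]
  · -- right inverse
    rintro ⟨x, hx⟩
    apply Subtype.ext
    have hd := hden2 x hx
    set a : ℝ := 1 + gauge Y x - ‖x‖ with ha
    show (1 + ‖a⁻¹ • x‖ - gauge Y (a⁻¹ • x))⁻¹ • a⁻¹ • x = x
    rw [gauge_smul_of_nonneg (inv_pos.2 hd).le, smul_eq_mul, norm_smul, norm_inv,
      Real.norm_eq_abs, abs_of_pos hd]
    have key : 1 + a⁻¹ * ‖x‖ - a⁻¹ * gauge Y x = a⁻¹ := by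
      field_simp
      linarith
    rw [key, smul_smul, inv_inv, mul_inv_cancel₀ hd.ne', one_smul]
  · -- continuity of toFun
    apply Continuous.subtype_mk
    have c1 : Continuous fun y : Y => 1 + ‖(y:V)‖ - gauge Y (y:V) :=
      (continuous_const.add continuous_subtype_val.norm).sub
        (hcont.comp continuous_subtype_val)
    exact (c1.inv₀ fun y => (hden1 _ y.2).ne').smul continuous_subtype_val
  · -- continuity of invFun
    apply Continuous.subtype_mk
    have c1 : Continuous fun x : B => 1 + gauge Y (x:V) - ‖(x:V)‖ :=
      (continuous_const.add (hcont.comp continuous_subtype_val)).sub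
        continuous_subtype_val.norm
    exact (c1.inv₀ fun x => (hden2 _ x.2).ne').smul continuous_subtype_val

end StarGauge

theorem stmt8 {V : Type*} [NormedAddCommGroup V] [NormedSpace ℝ V] [FiniteDimensional ℝ V]
    (X : Set V) (x0 : V) (hx0 : x0 ∈ X) (hX : IsClosed X)
    (hss : ∀ x ∈ X, ∀ t ∈ Set.Ico (0:ℝ) 1, x0 + t • (x - x0) ∈ interior X) :
    Nonempty (↥X ≃ₜ
      ↥(Metric.closedBall (0:V) 1 \
        {z ∈ Metric.sphere (0:V) 1 | ∀ s : ℝ, 0 ≤ s → x0 + s • z ∈ X})) := by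
  classical
  set e : V ≃ₜ V := Homeomorph.addRight (-x0) with he
  set Y : Set V := ⇑e '' X with hY
  have hmem : ∀ w : V, w ∈ Y ↔ w + x0 ∈ X := by
    intro w
    constructor
    · rintro ⟨v, hv, rfl⟩
      show v + -x0 + x0 ∈ X
      simpa using hv
    · intro h
      exact ⟨w + x0, h, by show w + x0 + -x0 = w; abel⟩
  have hY0 : (0:V) ∈ Y := (hmem 0).2 (by simpa using hx0)
  have hYc : IsClosed Y := e.isClosed_image.2 hX
  have hYst : ∀ y ∈ Y, ∀ t ∈ Set.Ico (0:ℝ) 1, t • y ∈ interior Y := by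
    rintro y ⟨x, hxX, rfl⟩ t ht
    have h1 := hss x hxX t ht
    have h2 : interior Y = ⇑e '' interior X := (e.image_interior X).symm
    rw [h2]
    refine ⟨x0 + t • (x - x0), h1, ?_⟩
    show x0 + t • (x - x0) + -x0 = t • (x + -x0)
    have h3 : x0 + t • (x - x0) + -x0 = t • (x - x0) := by abel
    rw [h3, sub_eq_add_neg]
  obtain ⟨e2⟩ := sg_homeo hY0 hYc hYst
  have hsets : {z ∈ Metric.sphere (0:V) 1 | ∀ s : ℝ, 0 ≤ s → s • z ∈ Y} =
      {z ∈ Metric.sphere (0:V) 1 | ∀ s : ℝ, 0 ≤ s → x0 + s • z ∈ X} := by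
    ext z
    simp only [Set.mem_setOf_eq]
    refine and_congr_right fun _ => forall_congr' fun s => imp_congr_right fun _ => ?_
    rw [hmem, add_comm]
  exact ⟨(e.image X).trans (e2.trans (Homeomorph.setCongr (by rw [hsets])))⟩
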